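/- Let p be a real polynomial of degree n that has n distinct real roots, and form the sequence of higher derivatives p⁽⁰⁾ = p, p⁽¹⁾ = p', ..., p⁽ⁿ⁾. Then this sequence is a Sturm chain with respect to any interval: for every index i with 0 < i < n and every real α with p⁽ⁱ⁾(α) = 0, one has p⁽ⁱ⁻¹⁾(α)·p⁽ⁱ⁺¹⁾(α) < 0. -/

import Mathlib

open Polynomial Finset

/-- Derivative of a product of distinct linear factors. -/
lemma sturm_deriv_prod (s : Finset ℝ) :
    derivative (∏ r ∈ s, (X - C r)) = ∑ r ∈ s, ∏ t ∈ s.erase r, (X - C t) := by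
  classical
  induction s using Finset.induction_on with
  | empty => simp
  | @insert a s ha ih =>
      rw [Finset.prod_insert ha, derivative_mul, ih, Finset.sum_insert ha,
        Finset.erase_insert ha]
      have h1 : (derivative (X - C a)) = 1 := by simp
      rw [h1, one_mul]
      congr 1
      rw [Finset.mul_sum]
      refine Finset.sum_congr rfl fun r hr => ?_
      rw [Finset.erase_insert_of_ne (by rintro rfl; exact ha hr),
        Finset.prod_insert (fun h => ha (Finset.mem_of_mem_erase h))]

/-- The key algebraic identity `Q·Q'' = (Q')² - ∑ P_r²`. -/
lemma sturm_identity (s : Finset ℝ) :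
    (∏ r ∈ s, (X - C r)) * derivative (derivative (∏ r ∈ s, (X - C r)))
      = (derivative (∏ r ∈ s, (X - C r)))^2
        - ∑ r ∈ s, (∏ t ∈ s.erase r, (X - C t))^2 := by
  classical
  rw [sturm_deriv_prod]
  rw [derivative_sum]
  have hd : ∀ r ∈ s, derivative (∏ t ∈ s.erase r, (X - C t))
      = ∑ t ∈ s.erase r, ∏ u ∈ (s.erase r).erase t, (X - C u) :=
    fun r _ => sturm_deriv_prod (s.erase r)
  rw [Finset.sum_congr rfl hd, Finset.mul_sum]
  have key : ∀ r ∈ s, (∏ x ∈ s, (X - C x)) *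
      (∑ t ∈ s.erase r, ∏ u ∈ (s.erase r).erase t, (X - C u))
      = ∑ t ∈ s.erase r, (∏ u ∈ s.erase r, (X - C u)) * (∏ u ∈ s.erase t, (X - C u)) := by
    intro r hr
    rw [Finset.mul_sum]
    refine Finset.sum_congr rfl fun t ht => ?_
    have htr : t ≠ r := Finset.ne_of_mem_erase ht
    have hts : t ∈ s := Finset.mem_of_mem_erase ht
    have hrt : r ∈ s.erase t := Finset.mem_erase.2 ⟨htr.symm, hr⟩
    -- ∏_{s} = (X - C r) * ∏_{s.erase r}
    -- ∏_{s.erase t} = (X - C r) * ∏_{(s.erase t).erase r}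
    rw [← Finset.mul_prod_erase s _ hr, ← Finset.mul_prod_erase (s.erase t) _ hrt,
      Finset.erase_right_comm]
    ring
  rw [Finset.sum_congr rfl key]
  rw [sq, Finset.sum_mul_sum]
  have split : ∀ r ∈ s, ∑ t ∈ s, (∏ u ∈ s.erase r, (X - C u)) * (∏ u ∈ s.erase t, (X - C u))
      = (∏ u ∈ s.erase r, (X - C u))^2
        + ∑ t ∈ s.erase r, (∏ u ∈ s.erase r, (X - C u)) * (∏ u ∈ s.erase t, (X - C u)) := by
    intro r hr
    rw [← Finset.add_sum_erase s _ hr, sq]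
  rw [Finset.sum_congr rfl split, Finset.sum_add_distrib]
  ring

/-- At a critical point of a real polynomial with all roots real and simple,
`q·q'' < 0`. -/
lemma sturm_key (q : Polynomial ℝ) (hq0 : 0 < q.natDegree)
    (hcard : q.natDegree ≤ q.roots.toFinset.card) (α : ℝ)
    (h : (derivative q).eval α = 0) :
    q.eval α * (derivative (derivative q)).eval α < 0 := by
  classical
  have hqne : q ≠ 0 := fun h0 => by simp [h0] at hq0
  have h1 : (Multiset.card q.roots) ≤ q.natDegree := q.card_roots'
  have h2 : q.roots.toFinset.card ≤ Multiset.card q.roots := Multiset.toFinset_card_le _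
  have hroots : Multiset.card q.roots = q.natDegree := le_antisymm h1 (le_trans hcard h2)
  have hnd : q.roots.Nodup :=
    Multiset.toFinset_card_eq_card_iff_nodup.1 (le_antisymm h2 (hroots ▸ hcard))
  have hsp : q.Splits := splits_iff_card_roots.2 hroots
  have hq : q = C q.leadingCoeff * (q.roots.map fun a => X - C a).prod :=
    hsp.eq_prod_roots
  set s : Finset ℝ := q.roots.toFinset with hs
  have hsval : s.val = q.roots := by
    rw [hs, Multiset.toFinset_val, Multiset.dedup_eq_self.2 hnd]
  have hprod : (q.roots.map fun a => X - C a).prod = ∏ r ∈ s, (X - C r) := by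
    rw [Finset.prod, hsval]
  rw [hprod] at hq
  set c : ℝ := q.leadingCoeff with hc
  have hcne : c ≠ 0 := leadingCoeff_ne_zero.2 hqne
  set Q : Polynomial ℝ := ∏ r ∈ s, (X - C r) with hQ
  have hd1 : derivative q = C c * derivative Q := by rw [hq, derivative_C_mul]
  have hd2 : derivative (derivative q) = C c * derivative (derivative Q) := by
    rw [hd1, derivative_C_mul]
  have hQ'0 : (derivative Q).eval α = 0 := by
    rw [hd1] at h
    simpa [hcne] using h
  have hid := sturm_identity s
  have hev : Q.eval α * (derivative (derivative Q)).eval α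
      = - ∑ r ∈ s, ((∏ t ∈ s.erase r, (X - C t)).eval α)^2 := by
    have := congrArg (fun f => Polynomial.eval α f) hid
    simp only [eval_mul, eval_sub, eval_pow, eval_finset_sum] at this
    rw [this, hQ'0]
    ring
  have hsne : s.Nonempty := by
    rw [← Finset.card_pos]
    exact lt_of_lt_of_le hq0 hcard
  have hpos : 0 < ∑ r ∈ s, ((∏ t ∈ s.erase r, (X - C t)).eval α)^2 := by
    apply Finset.sum_pos'
    · intro i _; positivity
    · by_cases hα : α ∈ s
      · refine ⟨α, hα, ?_⟩
        have : (∏ t ∈ s.erase α, (X - C t)).eval α ≠ 0 := by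
          rw [eval_prod]
          refine Finset.prod_ne_zero_iff.2 fun t ht => ?_
          have : t ≠ α := Finset.ne_of_mem_erase ht
          simp [sub_ne_zero.2 (Ne.symm this)]
        positivity
      · obtain ⟨r, hr⟩ := hsne
        refine ⟨r, hr, ?_⟩
        have : (∏ t ∈ s.erase r, (X - C t)).eval α ≠ 0 := by
          rw [eval_prod]
          refine Finset.prod_ne_zero_iff.2 fun t ht => ?_
          have : t ≠ α := fun h' => hα (h' ▸ Finset.mem_of_mem_erase ht)
          simp [sub_ne_zero.2 (Ne.symm this)]
        positivity
  calc q.eval α * (derivative (derivative q)).eval α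
      = c^2 * (Q.eval α * (derivative (derivative Q)).eval α) := by
        rw [hd2]; nth_rewrite 1 [hq]; simp [eval_mul]; ring
    _ = -(c^2 * ∑ r ∈ s, ((∏ t ∈ s.erase r, (X - C t)).eval α)^2) := by rw [hev]; ring
    _ < 0 := by
        rw [neg_lt_zero]
        exact mul_pos (by positivity) hpos

/-- One derivative step preserves "all roots real and simple". -/
lemma sturm_step (q : Polynomial ℝ) (hq0 : 0 < q.natDegree)
    (hcard : q.natDegree ≤ q.roots.toFinset.card) :
    (derivative q).natDegree = q.natDegree - 1 ∧
      (derivative q).natDegree ≤ (derivative q).roots.toFinset.card := by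
  have hdeg : (derivative q).natDegree = q.natDegree - 1 :=
    natDegree_eq_of_degree_eq_some (degree_derivative_eq q hq0)
  refine ⟨hdeg, ?_⟩
  rw [hdeg]
  have := q.card_roots_toFinset_le_derivative
  omega

/-- If `p` is a real polynomial of degree `n` with `n` distinct real roots,
then the sequence of its higher derivatives `p, p', ..., p⁽ⁿ⁾` is a Sturm
chain with respect to any interval: whenever `0 < i < n` and `α` is a real
root of `p⁽ⁱ⁾`, one has `p⁽ⁱ⁻¹⁾(α) · p⁽ⁱ⁺¹⁾(α) < 0`. -/
theorem derivatives_form_sturm_chain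
    (p : Polynomial ℝ) (n : ℕ)
    (hdeg : p.natDegree = n)
    (hsplit : p.Splits)
    (hdist : p.roots.toFinset.card = n) :
    ∀ i : ℕ, 0 < i → i < n → ∀ α : ℝ,
      ((Polynomial.derivative^[i] p).eval α = 0) →
      ((Polynomial.derivative^[i - 1] p).eval α) *
        ((Polynomial.derivative^[i + 1] p).eval α) < 0 := by
  have claim : ∀ i : ℕ, i ≤ n →
      (Polynomial.derivative^[i] p).natDegree = n - i ∧
        (Polynomial.derivative^[i] p).natDegree ≤
          (Polynomial.derivative^[i] p).roots.toFinset.card := by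
    intro i
    induction i with
    | zero => intro _; simpa [hdeg, hdist] using le_of_eq (hdeg.trans hdist.symm)
    | succ k ih =>
        intro hk
        obtain ⟨h1, h2⟩ := ih (Nat.le_of_succ_le hk)
        have hpos : 0 < (Polynomial.derivative^[k] p).natDegree := by omega
        obtain ⟨h3, h4⟩ := sturm_step _ hpos h2
        rw [Function.iterate_succ_apply']
        exact ⟨by omega, h4⟩
  intro i hi hin α hα
  obtain ⟨h1, h2⟩ := claim (i - 1) (by omega)
  have hpos : 0 < (Polynomial.derivative^[i - 1] p).natDegree := by omega
  have e1 : Polynomial.derivative^[i] p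
      = Polynomial.derivative (Polynomial.derivative^[i - 1] p) := by
    conv_lhs => rw [show i = (i - 1) + 1 by omega, Function.iterate_succ_apply']
  have e2 : Polynomial.derivative^[i + 1] p
      = Polynomial.derivative (Polynomial.derivative
          (Polynomial.derivative^[i - 1] p)) := by
    rw [show i + 1 = (i - 1) + 1 + 1 by omega, Function.iterate_succ_apply',
      Function.iterate_succ_apply']
  rw [e2]
  rw [e1] at hα
  exact sturm_key _ hpos h2 α hα
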